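/- arXiv:math/0608415 — 4 statements merged into one kernel-verified Lean document; each statement's English description precedes it below -/
import Mathlib

section
/- Let f be a quadratic form with rational coefficients in n+1 variables of signature (n,1), and let B(x,y) = (f(x+y) − f(x) − f(y))/2 be its polar bilinear form. Let e_0, e_1, ..., e_k ∈ ℤ^{n+1} be primitive integer vectors with f(e_i) > 0 for all i, and suppose that B(e_i, e_0)^2 ≥ f(e_i)·f(e_0) for i = 1, ..., k. Then there exists an integer N ≥ 1 such that for every matrix γ ∈ O(f,ℤ) that is congruent to the identity matrix modulo N, either γ·e_0 = e_0 or γ·e_0 = −e_0, or else for every i ∈ {0, 1, ..., k} one has γ·e_0 ∉ {e_i, −e_i} and B(γ·e_0, e_i)^2 ≥ f(e_0)·f(e_i). -/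
namespace Paper

open Matrix

/-- Value at `x` of the quadratic form with Gram matrix `Q`. -/
def qeval {m : ℕ} {R : Type*} [CommRing R] (Q : Matrix (Fin m) (Fin m) R) (x : Fin m → R) : R :=
  x ⬝ᵥ (Q *ᵥ x)

/-- The polar bilinear form `B(x,y) = (f(x+y) - f(x) - f(y))/2` of the quadratic form
with Gram matrix `Q`. -/
def qpolar {m : ℕ} {K : Type*} [Field K] (Q : Matrix (Fin m) (Fin m) K) (x y : Fin m → K) : K :=
  (qeval Q (x + y) - qeval Q x - qeval Q y) / 2

/-- A real quadratic form (given by its Gram matrix `Q`) has signature `(r,s)`: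
`r + s = m` and it is linearly equivalent over `ℝ` to
`x_1^2 + ... + x_r^2 - x_{r+1}^2 - ... - x_m^2`. -/
def RealSignature {m : ℕ} (Q : Matrix (Fin m) (Fin m) ℝ) (r s : ℕ) : Prop :=
  r + s = m ∧ ∃ T : Matrix (Fin m) (Fin m) ℝ, T.det ≠ 0 ∧
    ∀ x : Fin m → ℝ, qeval Q (T *ᵥ x) = ∑ i : Fin m, (if (i : ℕ) < r then (x i)^2 else -(x i)^2)

/-- A rational quadratic form has signature `(r,s)` if it does as a real quadratic form. -/
def HasSignature {m : ℕ} (Q : Matrix (Fin m) (Fin m) ℚ) (r s : ℕ) : Prop :=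
  RealSignature (Q.map (Rat.cast : ℚ → ℝ)) r s

/-- The rational quadratic form `F` (in `n` variables) represents the rational quadratic
form `G` (in `k` variables): after a linear change of coordinates over `ℚ`,
`F(x_1,...,x_n) = G(x_1,...,x_k) + H(x_{k+1},...,x_n)` for some rational quadratic form `H`. -/
def Represents {n k : ℕ} (F : Matrix (Fin n) (Fin n) ℚ) (G : Matrix (Fin k) (Fin k) ℚ) : Prop :=
  ∃ (m : ℕ) (hm : n = k + m) (H : Matrix (Fin m) (Fin m) ℚ) (T : Matrix (Fin n) (Fin n) ℚ),
    T.det ≠ 0 ∧ ∀ (x : Fin k → ℚ) (y : Fin m → ℚ),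
      qeval F (T *ᵥ (Fin.append x y ∘ Fin.cast hm)) = qeval G x + qeval H y

/-- The group `O(f, A)` of matrices in `GL(m, A)` preserving the quadratic form `f`
(with Gram matrix `Q` over `K ⊇ A`): those `M` with `f(Mx) = f(x)` for all `x`. -/
def ortho {m : ℕ} (A : Type*) [CommRing A] {K : Type*} [Field K] [Algebra A K]
    (Q : Matrix (Fin m) (Fin m) K) : Subgroup (GL (Fin m) A) where
  carrier := { M | ∀ x : Fin m → K,
      qeval Q (((M : Matrix (Fin m) (Fin m) A).map (algebraMap A K)) *ᵥ x) = qeval Q x }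
  one_mem' := by
    intro x
    have h1 : ((1 : GL (Fin m) A) : Matrix (Fin m) (Fin m) A).map (algebraMap A K) = 1 := by
      simp [Matrix.map_one]
    rw [h1, Matrix.one_mulVec]
  mul_mem' := by
    intro a b ha hb x
    have h : ((a * b : GL (Fin m) A) : Matrix (Fin m) (Fin m) A).map (algebraMap A K)
        = ((a : Matrix (Fin m) (Fin m) A).map (algebraMap A K)) *
          ((b : Matrix (Fin m) (Fin m) A).map (algebraMap A K)) := by
      rw [Units.val_mul, Matrix.map_mul]
    rw [h, ← Matrix.mulVec_mulVec, ha, hb]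
  inv_mem' := by
    intro a ha x
    set M := ((a : Matrix (Fin m) (Fin m) A).map (algebraMap A K)) with hM
    set N := (((a⁻¹ : GL (Fin m) A) : Matrix (Fin m) (Fin m) A).map (algebraMap A K)) with hN
    have hMN : M * N = 1 := by
      rw [hM, hN, ← Matrix.map_mul]
      have : (a : Matrix (Fin m) (Fin m) A) * ((a⁻¹ : GL (Fin m) A) : Matrix (Fin m) (Fin m) A)
          = 1 := a.mul_inv
      rw [this]
      simp [Matrix.map_one]
    have ha' : ∀ y : Fin m → K, qeval Q (M *ᵥ y) = qeval Q y := ha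
    calc qeval Q (N *ᵥ x) = qeval Q (M *ᵥ (N *ᵥ x)) := (ha' (N *ᵥ x)).symm
      _ = qeval Q ((M * N) *ᵥ x) := by rw [Matrix.mulVec_mulVec]
      _ = qeval Q x := by rw [hMN, Matrix.one_mulVec]

/-- `O(f, ℤ)` for a rational quadratic form `f` with Gram matrix `Q`. -/
abbrev OZ {m : ℕ} (Q : Matrix (Fin m) (Fin m) ℚ) : Subgroup (GL (Fin m) ℤ) := ortho ℤ Q

/-- A group is finitely presented: it is a quotient of a finitely generated free group by
the normal closure of a finite set of relators. -/
def IsFinitelyPresented (G : Type*) [Group G] : Prop :=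
  ∃ (n : ℕ) (rels : Set (FreeGroup (Fin n))), rels.Finite ∧ Nonempty (PresentedGroup rels ≃* G)

/-- A group is coherent if each of its finitely generated subgroups is finitely presented. -/
def IsCoherent (G : Type*) [Group G] : Prop :=
  ∀ H : Subgroup G, Group.FG H → IsFinitelyPresented H

/-- Two groups are abstractly commensurable if they contain isomorphic
subgroups of finite index. -/
def AbstractlyCommensurable (G H : Type*) [Group G] [Group H] : Prop :=
  ∃ (G' : Subgroup G) (H' : Subgroup H), G'.FiniteIndex ∧ H'.FiniteIndex ∧ Nonempty (G' ≃* H')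

/-- The form `q₃ = -x₀² + x₁² + x₂² + x₃²`. -/
def q3 : Matrix (Fin 4) (Fin 4) ℚ := Matrix.diagonal ![-1, 1, 1, 1]

/-- An integer vector is primitive if the gcd of its coordinates is `1`. -/
def IsPrimitiveVec {m : ℕ} (v : Fin m → ℤ) : Prop := Finset.univ.gcd v = 1

/-- The image in `ℚ^m` of an integer vector. -/
def intVecCast {m : ℕ} (v : Fin m → ℤ) : Fin m → ℚ := fun j => (v j : ℚ)

lemma dot_symm {m : ℕ} {K : Type*} [Field K] [CharZero K] (Q : Matrix (Fin m) (Fin m) K)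
    (hQ : Q.IsSymm) (x y : Fin m → K) : y ⬝ᵥ (Q *ᵥ x) = x ⬝ᵥ (Q *ᵥ y) := by
  simp only [dotProduct, Matrix.mulVec, Finset.mul_sum]
  rw [Finset.sum_comm]
  refine Finset.sum_congr rfl fun a _ => Finset.sum_congr rfl fun b _ => ?_
  rw [hQ.apply a b]
  ring

lemma qpolar_eq_dot {m : ℕ} {K : Type*} [Field K] [CharZero K] (Q : Matrix (Fin m) (Fin m) K)
    (hQ : Q.IsSymm) (x y : Fin m → K) : qpolar Q x y = x ⬝ᵥ (Q *ᵥ y) := by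
  simp only [qpolar, qeval, Matrix.mulVec_add, dotProduct_add, add_dotProduct]
  have h := dot_symm Q hQ x y
  field_simp
  linear_combination h

lemma qpolar_comm {m : ℕ} {K : Type*} [Field K] (Q : Matrix (Fin m) (Fin m) K)
    (x y : Fin m → K) : qpolar Q x y = qpolar Q y x := by
  simp only [qpolar]
  rw [add_comm x y]
  ring

lemma qpolar_self {m : ℕ} {K : Type*} [Field K] [CharZero K] (Q : Matrix (Fin m) (Fin m) K)
    (hQ : Q.IsSymm) (x : Fin m → K) : qpolar Q x x = qeval Q x :=
  qpolar_eq_dot Q hQ x x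

set_option maxHeartbeats 2000000 in
/-- hyperplane separability via congruence subgroups. -/
theorem congruence_hyperplane_separation (n k : ℕ)
    (Q : Matrix (Fin (n + 1)) (Fin (n + 1)) ℚ) (hQsymm : Q.IsSymm)
    (hsig : HasSignature Q n 1)
    (e : Fin (k + 1) → Fin (n + 1) → ℤ)
    (hprim : ∀ i, IsPrimitiveVec (e i))
    (hpos : ∀ i, 0 < qeval Q (intVecCast (e i)))
    (hsep : ∀ i : Fin (k + 1), i ≠ 0 →
      qeval Q (intVecCast (e i)) * qeval Q (intVecCast (e 0)) ≤
        (qpolar Q (intVecCast (e i)) (intVecCast (e 0))) ^ 2) :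
    ∃ N : ℕ, 1 ≤ N ∧ ∀ γ : GL (Fin (n + 1)) ℤ, γ ∈ OZ Q →
      (∀ i j, (N : ℤ) ∣ ((γ : Matrix (Fin (n + 1)) (Fin (n + 1)) ℤ) i j -
        (1 : Matrix (Fin (n + 1)) (Fin (n + 1)) ℤ) i j)) →
      (((γ : Matrix (Fin (n + 1)) (Fin (n + 1)) ℤ) *ᵥ e 0 = e 0) ∨
        ((γ : Matrix (Fin (n + 1)) (Fin (n + 1)) ℤ) *ᵥ e 0 = - e 0)) ∨
      (∀ i : Fin (k + 1),
        ((γ : Matrix (Fin (n + 1)) (Fin (n + 1)) ℤ) *ᵥ e 0 ≠ e i ∧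
          (γ : Matrix (Fin (n + 1)) (Fin (n + 1)) ℤ) *ᵥ e 0 ≠ - e i) ∧
        qeval Q (intVecCast (e 0)) * qeval Q (intVecCast (e i)) ≤
          (qpolar Q (intVecCast ((γ : Matrix (Fin (n + 1)) (Fin (n + 1)) ℤ) *ᵥ e 0))
            (intVecCast (e i))) ^ 2) := by
  classical
  -- a common denominator for the entries of Q
  set D : ℕ := ∏ p : Fin (n + 1) × Fin (n + 1), (Q p.1 p.2).den with hDdef
  have hD1 : 1 ≤ D := Finset.one_le_prod' fun p _ => (Q p.1 p.2).pos
  have hDQ : (0:ℚ) < (D:ℚ) := by exact_mod_cast hD1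
  have hQZex : ∀ j l : Fin (n + 1), ∃ z : ℤ, ((z : ℚ)) = (D : ℚ) * Q j l := by
    intro j l
    obtain ⟨t, ht⟩ : ((Q j l).den) ∣ D :=
      Finset.dvd_prod_of_mem (fun p => (Q p.1 p.2).den) (Finset.mem_univ (j, l))
    refine ⟨t * (Q j l).num, ?_⟩
    have hden : (((Q j l).den : ℚ)) ≠ 0 := by
      exact_mod_cast (Q j l).pos.ne'
    have hnd : ((Q j l).num : ℚ) = ((Q j l).den : ℚ) * Q j l := by
      have h := Rat.num_div_den (Q j l)
      rw [div_eq_iff hden] at h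
      rw [h]; ring
    push_cast
    rw [ht, hnd]
    push_cast
    ring
  choose QZ hQZ using hQZex
  -- the key integrality identity
  have hkey : ∀ u w : Fin (n + 1) → ℤ,
      (D : ℚ) * qpolar Q (intVecCast u) (intVecCast w)
        = ((∑ j, ∑ l, u j * QZ j l * w l : ℤ) : ℚ) := by
    intro u w
    rw [qpolar_eq_dot Q hQsymm]
    simp only [dotProduct, Matrix.mulVec, intVecCast, Finset.mul_sum]
    push_cast
    refine Finset.sum_congr rfl fun j _ => Finset.sum_congr rfl fun l _ => ?_
    rw [hQZ j l]
    ring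
  -- the constants c i = B(e 0, e i)
  set c : Fin (k + 1) → ℚ := fun i => qpolar Q (intVecCast (e 0)) (intVecCast (e i)) with hc
  have hsep' : ∀ i, qeval Q (intVecCast (e 0)) * qeval Q (intVecCast (e i)) ≤ (c i) ^ 2 := by
    intro i
    by_cases h0 : i = 0
    · subst h0
      rw [hc]
      simp only
      rw [qpolar_self Q hQsymm]
      rw [sq]
    · calc qeval Q (intVecCast (e 0)) * qeval Q (intVecCast (e i))
          = qeval Q (intVecCast (e i)) * qeval Q (intVecCast (e 0)) := mul_comm _ _
        _ ≤ (qpolar Q (intVecCast (e i)) (intVecCast (e 0))) ^ 2 := hsep i h0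
        _ = (c i) ^ 2 := by rw [hc]; simp only; rw [qpolar_comm]
  -- the bound S
  set S : ℚ := (∑ i : Fin (k + 1), 2 * (D:ℚ) * |c i|)
      + (∑ p : Fin (k + 1) × Fin (n + 1), (|(e p.1 p.2 : ℚ)| + |(e 0 p.2 : ℚ)|)) with hS
  have hSb1 : ∀ i, 2 * (D:ℚ) * |c i| ≤ S := by
    intro i
    have h1 : 2 * (D:ℚ) * |c i| ≤ ∑ i : Fin (k + 1), 2 * (D:ℚ) * |c i| :=
      Finset.single_le_sum (f := fun i => 2 * (D:ℚ) * |c i|)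
        (fun i _ => by positivity) (Finset.mem_univ i)
    have h2 : (0:ℚ) ≤ ∑ p : Fin (k + 1) × Fin (n + 1), (|(e p.1 p.2 : ℚ)| + |(e 0 p.2 : ℚ)|) :=
      Finset.sum_nonneg fun p _ => by positivity
    rw [hS]; linarith
  have hSb2 : ∀ (i : Fin (k + 1)) (j : Fin (n + 1)),
      |(e i j : ℚ)| + |(e 0 j : ℚ)| ≤ S := by
    intro i j
    have h1 : |(e i j : ℚ)| + |(e 0 j : ℚ)|
        ≤ ∑ p : Fin (k + 1) × Fin (n + 1), (|(e p.1 p.2 : ℚ)| + |(e 0 p.2 : ℚ)|) := by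
      have h := Finset.single_le_sum (s := Finset.univ)
          (f := fun p : Fin (k + 1) × Fin (n + 1) => |(e p.1 p.2 : ℚ)| + |(e 0 p.2 : ℚ)|)
          (fun p _ => by positivity) (Finset.mem_univ (i, j))
      simpa using h
    have h2 : (0:ℚ) ≤ ∑ i : Fin (k + 1), 2 * (D:ℚ) * |c i| :=
      Finset.sum_nonneg fun i _ => by positivity
    rw [hS]; linarith
  -- choose N
  obtain ⟨N₀, hN₀⟩ := exists_nat_gt S
  refine ⟨N₀ + 1, Nat.le_add_left 1 N₀, ?_⟩
  have hSN : S < ((N₀ + 1 : ℕ) : ℚ) := by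
    push_cast
    have : ((N₀:ℚ)) ≤ (N₀:ℚ) + 1 := by linarith
    linarith
  set N : ℕ := N₀ + 1 with hNdef
  intro γ hγ hcong
  set M : Matrix (Fin (n + 1)) (Fin (n + 1)) ℤ := (γ : Matrix (Fin (n + 1)) (Fin (n + 1)) ℤ)
    with hM
  set v : Fin (n + 1) → ℤ := M *ᵥ e 0 with hv
  by_cases hfix : v = e 0 ∨ v = -e 0
  · exact Or.inl hfix
  · right
    push_neg at hfix
    -- congruence of v with e 0
    have hdvd : ∀ j, (N : ℤ) ∣ (v j - e 0 j) := by
      intro j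
      have hveq : v - e 0 = (M - 1) *ᵥ e 0 := by
        rw [Matrix.sub_mulVec, Matrix.one_mulVec]
      have h1 : v j - e 0 j = ∑ l, (M j l - (1 : Matrix (Fin (n+1)) (Fin (n+1)) ℤ) j l) * e 0 l := by
        have := congrFun hveq j
        simp only [Pi.sub_apply] at this
        rw [this]
        simp [Matrix.mulVec, dotProduct, Matrix.sub_apply]
      rw [h1]
      exact Finset.dvd_sum fun l _ => Dvd.dvd.mul_right (hcong j l) _
    choose t ht using fun j => hdvd j
    intro i
    constructor
    · constructor
      · intro hvi
        refine hfix.1 ?_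
        have heq : ∀ j, e i j = e 0 j := by
          intro j
          have hd : (N : ℤ) ∣ (e i j - e 0 j) := by rw [← hvi]; exact hdvd j
          have habs : |e i j - e 0 j| < (N : ℤ) := by
            have h1 : (|(e i j : ℚ)| + |(e 0 j : ℚ)|) < (N:ℚ) := lt_of_le_of_lt (hSb2 i j) hSN
            have h2 : |(e i j - e 0 j : ℤ)| ≤ |e i j| + |e 0 j| := abs_sub _ _
            have h3 : ((|e i j| + |e 0 j| : ℤ) : ℚ) < (N:ℚ) := by push_cast; push_cast at h1; linarith
            have h4 : (|e i j| + |e 0 j| : ℤ) < (N:ℤ) := by exact_mod_cast h3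
            omega
          have := Int.eq_zero_of_abs_lt_dvd hd habs
          omega
        rw [hvi]
        funext j
        exact heq j
      · intro hvi
        refine hfix.1 ?_
        have heq : ∀ j, -(e i j) = e 0 j := by
          intro j
          have hd : (N : ℤ) ∣ (-(e i j) - e 0 j) := by
            have := hdvd j
            rw [hvi] at this
            simpa using this
          have habs : |-(e i j) - e 0 j| < (N : ℤ) := by
            have h1 : (|(e i j : ℚ)| + |(e 0 j : ℚ)|) < (N:ℚ) := lt_of_le_of_lt (hSb2 i j) hSN
            have h2 : |(-(e i j) - e 0 j : ℤ)| ≤ |e i j| + |e 0 j| := by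
              have := abs_sub (-(e i j)) (e 0 j)
              simpa using this
            have h3 : ((|e i j| + |e 0 j| : ℤ) : ℚ) < (N:ℚ) := by push_cast; push_cast at h1; linarith
            have h4 : (|e i j| + |e 0 j| : ℤ) < (N:ℤ) := by exact_mod_cast h3
            omega
          have := Int.eq_zero_of_abs_lt_dvd hd habs
          omega
        rw [hvi]
        funext j
        simp only [Pi.neg_apply]
        exact heq j
    · -- the inequality
      by_contra hcon
      push_neg at hcon
      set b : ℚ := qpolar Q (intVecCast v) (intVecCast (e i)) with hb
      have hblt : b ^ 2 < (c i) ^ 2 := lt_of_lt_of_le hcon (hsep' i)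
      have habs : |b| < |c i| := by
        have h1 : |b| ^ 2 < |c i| ^ 2 := by rw [sq_abs, sq_abs]; exact hblt
        exact lt_of_pow_lt_pow_left₀ 2 (abs_nonneg _) h1
      have hne : b ≠ c i := by
        intro h
        rw [h] at hblt
        exact lt_irrefl _ hblt
      -- compute D * (b - c i)
      set s : ℤ := ∑ j, ∑ l, t j * QZ j l * e i l with hs
      have hcast : (D : ℚ) * (b - c i) = (((N : ℤ) * s : ℤ) : ℚ) := by
        have h1 : b - c i = qpolar Q (intVecCast (v - e 0)) (intVecCast (e i)) := by
          rw [hb, hc]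
          simp only
          rw [qpolar_eq_dot Q hQsymm, qpolar_eq_dot Q hQsymm, qpolar_eq_dot Q hQsymm]
          have : intVecCast (v - e 0) = intVecCast v - intVecCast (e 0) := by
            funext j
            simp [intVecCast]
          rw [this, sub_dotProduct]
        have h2 : (∑ j, ∑ l, (v - e 0) j * QZ j l * e i l : ℤ) = (N : ℤ) * s := by
          rw [hs, Finset.mul_sum]
          refine Finset.sum_congr rfl fun j _ => ?_
          rw [Finset.mul_sum]
          refine Finset.sum_congr rfl fun l _ => ?_
          have hj : (v - e 0) j = (N : ℤ) * t j := by
            rw [Pi.sub_apply]; exact ht j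
          rw [hj]; ring
        rw [h1, hkey (v - e 0) (e i), h2]
      have hs0 : s ≠ 0 := by
        intro h0
        apply hne
        rw [h0, mul_zero, Int.cast_zero] at hcast
        have : b - c i = 0 := by
          rcases mul_eq_zero.mp hcast with h | h
          · exact absurd h hDQ.ne'
          · exact h
        linarith [this]
      have hlow : (N : ℚ) ≤ |(D : ℚ) * (b - c i)| := by
        have hz : (N:ℤ) ≤ |(N:ℤ) * s| := by
          rw [abs_mul, abs_of_nonneg (by positivity : (0:ℤ) ≤ (N:ℤ))]
          have h2 := Int.one_le_abs hs0
          nlinarith [h2, (show (0:ℤ) < (N:ℤ) by positivity)]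
        calc (N:ℚ) = (((N:ℤ)):ℚ) := (Int.cast_natCast N).symm
          _ ≤ ((|(N:ℤ) * s| : ℤ) : ℚ) := by exact_mod_cast hz
          _ = |(((N:ℤ) * s : ℤ) : ℚ)| := by rw [Int.cast_abs]
          _ = |(D:ℚ) * (b - c i)| := by rw [hcast]
      have hhigh : |(D : ℚ) * (b - c i)| < (N : ℚ) := by
        rw [abs_mul, abs_of_nonneg hDQ.le]
        have h1 : |b - c i| ≤ |b| + |c i| := abs_sub _ _
        have h2 : |b| + |c i| < 2 * |c i| := by linarith
        have h3 : (D:ℚ) * |b - c i| < (D:ℚ) * (2 * |c i|) := by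
          apply mul_lt_mul_of_pos_left _ hDQ
          linarith
        have h4 : (D:ℚ) * (2 * |c i|) = 2 * (D:ℚ) * |c i| := by ring
        calc (D:ℚ) * |b - c i| < 2 * (D:ℚ) * |c i| := by rw [← h4]; exact h3
          _ ≤ S := hSb1 i
          _ < (N : ℚ) := hSN
      linarith [lt_of_le_of_lt hlow hhigh]

end Paper
end

section
/- Let f and g be nonsingular quadratic forms with rational coefficients such that f represents g. Then there exist a finite-index subgroup H of O(g,ℤ) and an injective group homomorphism from H into O(f,ℤ). -/
namespace Paper

open Matrix

/-! ### Auxiliary material for Statement 9 -/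

section Stmt9Aux

/-- A rational number is an integer. -/
def IsIntRat (q : ℚ) : Prop := ∃ z : ℤ, (z : ℚ) = q

lemma IsIntRat.add {a b : ℚ} (ha : IsIntRat a) (hb : IsIntRat b) : IsIntRat (a + b) := by
  obtain ⟨x, hx⟩ := ha; obtain ⟨y, hy⟩ := hb
  exact ⟨x + y, by rw [Int.cast_add, hx, hy]⟩

lemma IsIntRat.mul {a b : ℚ} (ha : IsIntRat a) (hb : IsIntRat b) : IsIntRat (a * b) := by
  obtain ⟨x, hx⟩ := ha; obtain ⟨y, hy⟩ := hb
  exact ⟨x * y, by rw [Int.cast_mul, hx, hy]⟩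

lemma IsIntRat.sum {ι : Type*} (s : Finset ι) (f : ι → ℚ) (h : ∀ i ∈ s, IsIntRat (f i)) :
    IsIntRat (∑ i ∈ s, f i) := by
  classical
  induction s using Finset.induction_on with
  | empty => exact ⟨0, by simp⟩
  | insert _ _ hx ih =>
    rw [Finset.sum_insert hx]
    exact (h _ (Finset.mem_insert_self _ _)).add
      (ih fun i hi => h i (Finset.mem_insert_of_mem hi))

lemma isIntRat_of_den_dvd {q : ℚ} {n : ℤ} (h : (q.den : ℤ) ∣ n) : IsIntRat ((n : ℚ) * q) := by
  obtain ⟨c, hc⟩ := h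
  have hden : (q.den : ℚ) ≠ 0 := by exact_mod_cast q.den_ne_zero
  have h1 : (q.den : ℚ) * q = (q.num : ℚ) := by
    rw [mul_comm, ← eq_div_iff hden]
    exact (Rat.num_div_den q).symm
  refine ⟨c * q.num, ?_⟩
  rw [hc]
  push_cast
  linear_combination (-(c : ℚ)) * h1

variable {nf ng mm : ℕ}

/-- The identification `Fin nf ≃ Fin ng ⊕ Fin mm` coming from `nf = ng + mm`. -/
def eSum (hm : nf = ng + mm) : Fin nf ≃ Fin ng ⊕ Fin mm :=
  (finCongr hm).trans finSumFinEquiv.symm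

/-- Block-diagonal embedding `M ↦ M ⊕ 1`. -/
def emb (hm : nf = ng + mm) (M : Matrix (Fin ng) (Fin ng) ℚ) : Matrix (Fin nf) (Fin nf) ℚ :=
  (fromBlocks M 0 0 (1 : Matrix (Fin mm) (Fin mm) ℚ)).submatrix (eSum hm) (eSum hm)

/-- Block embedding `M ↦ M ⊕ 0`. -/
def emb0 (hm : nf = ng + mm) (M : Matrix (Fin ng) (Fin ng) ℚ) : Matrix (Fin nf) (Fin nf) ℚ :=
  (fromBlocks M 0 0 (0 : Matrix (Fin mm) (Fin mm) ℚ)).submatrix (eSum hm) (eSum hm)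

lemma emb_mul (hm : nf = ng + mm) (A B : Matrix (Fin ng) (Fin ng) ℚ) :
    emb hm A * emb hm B = emb hm (A * B) := by
  unfold emb
  rw [submatrix_mul_equiv, fromBlocks_multiply]
  simp

lemma emb_one (hm : nf = ng + mm) : emb hm (1 : Matrix (Fin ng) (Fin ng) ℚ) = 1 := by
  unfold emb
  rw [fromBlocks_one, submatrix_one_equiv]

lemma emb_eq_one_add (hm : nf = ng + mm) (A : Matrix (Fin ng) (Fin ng) ℚ) :
    emb hm A = 1 + emb0 hm (A - 1) := by
  ext i j
  rw [emb, emb0, Matrix.add_apply, submatrix_apply, submatrix_apply]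
  have h1 : (1 : Matrix (Fin nf) (Fin nf) ℚ) i j
      = (1 : Matrix (Fin ng ⊕ Fin mm) (Fin ng ⊕ Fin mm) ℚ) (eSum hm i) (eSum hm j) := by
    simp [Matrix.one_apply, (eSum hm).injective.eq_iff]
  rw [h1]
  generalize eSum hm i = a
  generalize eSum hm j = b
  cases a <;> cases b <;>
    simp [fromBlocks_apply₁₁, fromBlocks_apply₁₂, fromBlocks_apply₂₁, fromBlocks_apply₂₂,
      Matrix.one_apply, Matrix.sub_apply]

lemma emb_injective (hm : nf = ng + mm) : Function.Injective (emb hm) := by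
  intro A B h
  have h2 := congrArg (fun X => X.submatrix (eSum hm).symm (eSum hm).symm) h
  simp only [emb, submatrix_submatrix, Equiv.self_comp_symm, submatrix_id_id] at h2
  ext i j
  have h3 := congrFun (congrFun h2 (Sum.inl i)) (Sum.inl j)
  simpa [fromBlocks_apply₁₁] using h3

lemma append_eq_elim (hm : nf = ng + mm) (x : Fin ng → ℚ) (y : Fin mm → ℚ) :
    Fin.append x y ∘ Fin.cast hm = Sum.elim x y ∘ (eSum hm) := by
  funext i
  simp only [Function.comp_apply, eSum, Equiv.trans_apply, finCongr_apply]
  generalize Fin.cast hm i = j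
  induction j using Fin.addCases with
  | left j => simp
  | right j => simp

lemma decomp_vec (hm : nf = ng + mm) (v : Fin nf → ℚ) :
    v = Sum.elim (fun i => v ((eSum hm).symm (.inl i))) (fun j => v ((eSum hm).symm (.inr j)))
      ∘ (eSum hm) := by
  funext i
  simp only [Function.comp_apply]
  cases h : (eSum hm) i with
  | inl a => rw [Sum.elim_inl, ← h, Equiv.symm_apply_apply]
  | inr b => rw [Sum.elim_inr, ← h, Equiv.symm_apply_apply]

lemma emb_mulVec (hm : nf = ng + mm) (M : Matrix (Fin ng) (Fin ng) ℚ)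
    (x : Fin ng → ℚ) (y : Fin mm → ℚ) :
    emb hm M *ᵥ (Sum.elim x y ∘ (eSum hm)) = Sum.elim (M *ᵥ x) y ∘ (eSum hm) := by
  unfold emb
  rw [submatrix_mulVec_equiv]
  have h1 : (Sum.elim x y ∘ (eSum hm)) ∘ (eSum hm).symm = Sum.elim x y := by
    funext s; simp
  rw [h1, fromBlocks_mulVec]
  simp

/-- The conjugated block matrix `T (M ⊕ 1) T⁻¹`. -/
noncomputable def Smap (hm : nf = ng + mm) (T : Matrix (Fin nf) (Fin nf) ℚ)
    (M : Matrix (Fin ng) (Fin ng) ℚ) : Matrix (Fin nf) (Fin nf) ℚ :=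
  T * emb hm M * T⁻¹

lemma Smap_mul (hm : nf = ng + mm) {T : Matrix (Fin nf) (Fin nf) ℚ} (hT : T.det ≠ 0)
    (A B : Matrix (Fin ng) (Fin ng) ℚ) :
    Smap hm T A * Smap hm T B = Smap hm T (A * B) := by
  have hTu : IsUnit T.det := isUnit_iff_ne_zero.mpr hT
  unfold Smap
  simp only [Matrix.mul_assoc]
  rw [Matrix.nonsing_inv_mul_cancel_left _ _ hTu, ← Matrix.mul_assoc (emb hm A), emb_mul]

lemma Smap_one (hm : nf = ng + mm) {T : Matrix (Fin nf) (Fin nf) ℚ} (hT : T.det ≠ 0) :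
    Smap hm T 1 = 1 := by
  unfold Smap
  rw [emb_one, Matrix.mul_one, Matrix.mul_nonsing_inv _ (isUnit_iff_ne_zero.mpr hT)]

lemma qeval_Smap (hm : nf = ng + mm) (F : Matrix (Fin nf) (Fin nf) ℚ)
    (G : Matrix (Fin ng) (Fin ng) ℚ) (Hq : Matrix (Fin mm) (Fin mm) ℚ)
    {T : Matrix (Fin nf) (Fin nf) ℚ} (hT : T.det ≠ 0)
    (hFG : ∀ (x : Fin ng → ℚ) (y : Fin mm → ℚ),
      qeval F (T *ᵥ (Fin.append x y ∘ Fin.cast hm)) = qeval G x + qeval Hq y)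
    (M : Matrix (Fin ng) (Fin ng) ℚ) (hM : ∀ x, qeval G (M *ᵥ x) = qeval G x)
    (z : Fin nf → ℚ) : qeval F (Smap hm T M *ᵥ z) = qeval F z := by
  set v := T⁻¹ *ᵥ z with hv
  have hz : T *ᵥ v = z := by
    rw [hv, Matrix.mulVec_mulVec, Matrix.mul_nonsing_inv _ (isUnit_iff_ne_zero.mpr hT), Matrix.one_mulVec]
  set x := fun i => v ((eSum hm).symm (.inl i)) with hx
  set y := fun j => v ((eSum hm).symm (.inr j)) with hy
  have hvd : v = Sum.elim x y ∘ (eSum hm) := decomp_vec hm v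
  have h1 : Smap hm T M *ᵥ z = T *ᵥ (Sum.elim (M *ᵥ x) y ∘ (eSum hm)) := by
    unfold Smap
    rw [← Matrix.mulVec_mulVec, ← Matrix.mulVec_mulVec, ← hv, hvd, emb_mulVec]
  rw [h1, ← append_eq_elim, hFG, hM, ← hFG, append_eq_elim, ← hvd, hz]

/-- A common denominator for products of entries of `T` and `T⁻¹`. -/
noncomputable def denT (T : Matrix (Fin nf) (Fin nf) ℚ) : ℕ :=
  (∏ p : Fin nf × Fin nf, (T p.1 p.2).den) * (∏ p : Fin nf × Fin nf, (T⁻¹ p.1 p.2).den)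

lemma denT_pos (T : Matrix (Fin nf) (Fin nf) ℚ) : 0 < denT T :=
  mul_pos (Finset.prod_pos fun p _ => (T p.1 p.2).den_pos)
    (Finset.prod_pos fun p _ => (T⁻¹ p.1 p.2).den_pos)

lemma entry_den_int {k : ℕ} (U : Matrix (Fin k) (Fin k) ℚ) (i j : Fin k) :
    IsIntRat (((∏ p : Fin k × Fin k, (U p.1 p.2).den : ℕ) : ℚ) * U i j) := by
  have hdvd : (U i j).den ∣ ∏ p : Fin k × Fin k, (U p.1 p.2).den :=
    Finset.dvd_prod_of_mem (fun p => (U p.1 p.2).den) (Finset.mem_univ (i, j))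
  have h1 := isIntRat_of_den_dvd (q := U i j)
    (n := ((∏ p : Fin k × Fin k, (U p.1 p.2).den : ℕ) : ℤ)) (Int.natCast_dvd_natCast.mpr hdvd)
  have e : ((((∏ p : Fin k × Fin k, (U p.1 p.2).den : ℕ) : ℤ)) : ℚ)
      = (((∏ p : Fin k × Fin k, (U p.1 p.2).den : ℕ)) : ℚ) := by push_cast; ring
  rwa [e] at h1

lemma denT_int (T : Matrix (Fin nf) (Fin nf) ℚ) (i a b j : Fin nf) :
    IsIntRat ((denT T : ℚ) * (T i a * T⁻¹ b j)) := by
  have h1 := entry_den_int T i a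
  have h2 := entry_den_int T⁻¹ b j
  have h3 := h1.mul h2
  have e : (denT T : ℚ) * (T i a * T⁻¹ b j)
      = ((∏ p : Fin nf × Fin nf, (T p.1 p.2).den : ℕ) : ℚ) * T i a *
        (((∏ p : Fin nf × Fin nf, (T⁻¹ p.1 p.2).den : ℕ) : ℚ) * T⁻¹ b j) := by
    rw [denT]
    push_cast
    ring
  rw [e]
  exact h3

lemma Smap_int (hm : nf = ng + mm) {T : Matrix (Fin nf) (Fin nf) ℚ} (hT : T.det ≠ 0)
    (M : Matrix (Fin ng) (Fin ng) ℤ)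
    (hM : ∀ i j, (denT T : ℤ) ∣ (M i j - (1 : Matrix (Fin ng) (Fin ng) ℤ) i j))
    (i j : Fin nf) : IsIntRat (Smap hm T (M.map (Int.cast : ℤ → ℚ)) i j) := by
  classical
  have hmap : (M.map (Int.cast : ℤ → ℚ)) - 1 = (M - 1).map (Int.cast : ℤ → ℚ) := by
    ext a b
    simp [Matrix.map_apply, Matrix.sub_apply, Matrix.one_apply, apply_ite (Int.cast : ℤ → ℚ)]
  have hS : Smap hm T (M.map (Int.cast : ℤ → ℚ))
      = 1 + T * emb0 hm ((M - 1).map (Int.cast : ℤ → ℚ)) * T⁻¹ := by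
    unfold Smap
    rw [emb_eq_one_add, hmap, Matrix.mul_add, Matrix.mul_one, Matrix.add_mul,
      Matrix.mul_nonsing_inv _ (isUnit_iff_ne_zero.mpr hT)]
  rw [hS, Matrix.add_apply]
  refine IsIntRat.add ?_ ?_
  · rw [Matrix.one_apply]
    split
    · exact ⟨1, by norm_num⟩
    · exact ⟨0, by norm_num⟩
  · rw [Matrix.mul_apply]
    refine IsIntRat.sum _ _ fun a _ => ?_
    rw [Matrix.mul_apply, Finset.sum_mul]
    refine IsIntRat.sum _ _ fun b _ => ?_
    have hz : ∃ z : ℤ, (emb0 hm ((M - 1).map (Int.cast : ℤ → ℚ))) b a = (denT T : ℚ) * z := by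
      unfold emb0
      rw [submatrix_apply]
      cases hb : (eSum hm) b with
      | inl c =>
        cases ha : (eSum hm) a with
        | inl d =>
          rw [fromBlocks_apply₁₁]
          obtain ⟨z, hz⟩ := hM c d
          refine ⟨z, ?_⟩
          have : (M - 1) c d = (denT T : ℤ) * z := by
            rw [Matrix.sub_apply]; exact hz
          rw [Matrix.map_apply, this]
          push_cast
          ring
        | inr d => exact ⟨0, by rw [fromBlocks_apply₁₂]; simp⟩
      | inr c =>
        cases ha : (eSum hm) a with
        | inl d => exact ⟨0, by rw [fromBlocks_apply₂₁]; simp⟩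
        | inr d => exact ⟨0, by rw [fromBlocks_apply₂₂]; simp⟩
    obtain ⟨z, hz⟩ := hz
    rw [hz]
    have h4 := IsIntRat.mul ⟨z, rfl⟩ (denT_int T i b a j)
    have e : T i b * ((denT T : ℚ) * z) * T⁻¹ a j
        = (z : ℚ) * ((denT T : ℚ) * (T i b * T⁻¹ a j)) := by ring
    rw [e]
    exact h4

/-- Integer matrix of numerators. -/
def intMat (A : Matrix (Fin nf) (Fin nf) ℚ) : Matrix (Fin nf) (Fin nf) ℤ :=
  fun i j => (A i j).num

lemma intMat_map {A : Matrix (Fin nf) (Fin nf) ℚ} (h : ∀ i j, IsIntRat (A i j)) :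
    (intMat A).map (Int.cast : ℤ → ℚ) = A := by
  ext i j
  obtain ⟨z, hz⟩ := h i j
  rw [Matrix.map_apply, intMat, ← hz, Rat.num_intCast]

end Stmt9Aux

section Stmt9Aux2

variable {nf ng mm : ℕ}

lemma mapZQ_mul {k : ℕ} (A B : Matrix (Fin k) (Fin k) ℤ) :
    (A * B).map (Int.cast : ℤ → ℚ)
      = A.map (Int.cast : ℤ → ℚ) * B.map (Int.cast : ℤ → ℚ) := by
  ext i j
  simp [Matrix.map_apply, Matrix.mul_apply]

lemma mapZQ_one {k : ℕ} :
    ((1 : Matrix (Fin k) (Fin k) ℤ).map (Int.cast : ℤ → ℚ)) = 1 := by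
  ext i j
  simp [Matrix.map_apply, Matrix.one_apply, apply_ite (Int.cast : ℤ → ℚ)]

lemma algMapZQ : ⇑(algebraMap ℤ ℚ) = (Int.cast : ℤ → ℚ) := by
  funext z; simp

/-- `A ≡ 1 (mod D)` entrywise. -/
def CongOne {k : ℕ} (D : ℕ) (A : Matrix (Fin k) (Fin k) ℤ) : Prop :=
  ∀ i j, (D : ℤ) ∣ (A i j - (1 : Matrix (Fin k) (Fin k) ℤ) i j)

/-- Integer version of `T (A ⊕ 1) T⁻¹`. -/
noncomputable def SZ (hm : nf = ng + mm) (T : Matrix (Fin nf) (Fin nf) ℚ)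
    (A : Matrix (Fin ng) (Fin ng) ℤ) : Matrix (Fin nf) (Fin nf) ℤ :=
  intMat (Smap hm T (A.map (Int.cast : ℤ → ℚ)))

lemma SZ_map (hm : nf = ng + mm) {T : Matrix (Fin nf) (Fin nf) ℚ} (hT : T.det ≠ 0)
    {A : Matrix (Fin ng) (Fin ng) ℤ} (hA : CongOne (denT T) A) :
    (SZ hm T A).map (Int.cast : ℤ → ℚ) = Smap hm T (A.map (Int.cast : ℤ → ℚ)) :=
  intMat_map (Smap_int hm hT A hA)

lemma SZ_mul (hm : nf = ng + mm) {T : Matrix (Fin nf) (Fin nf) ℚ} (hT : T.det ≠ 0)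
    {A B : Matrix (Fin ng) (Fin ng) ℤ} (hA : CongOne (denT T) A) (hB : CongOne (denT T) B)
    (hAB : CongOne (denT T) (A * B)) :
    SZ hm T (A * B) = SZ hm T A * SZ hm T B := by
  apply Matrix.map_injective (Int.cast_injective (α := ℚ))
  show (SZ hm T (A * B)).map (Int.cast : ℤ → ℚ)
    = (SZ hm T A * SZ hm T B).map (Int.cast : ℤ → ℚ)
  rw [mapZQ_mul, SZ_map hm hT hA, SZ_map hm hT hB, SZ_map hm hT hAB, Smap_mul hm hT,
    mapZQ_mul]

lemma SZ_mul_eq_one (hm : nf = ng + mm) {T : Matrix (Fin nf) (Fin nf) ℚ} (hT : T.det ≠ 0)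
    {A B : Matrix (Fin ng) (Fin ng) ℤ} (hA : CongOne (denT T) A) (hB : CongOne (denT T) B)
    (hABone : A * B = 1) : SZ hm T A * SZ hm T B = 1 := by
  apply Matrix.map_injective (Int.cast_injective (α := ℚ))
  show (SZ hm T A * SZ hm T B).map (Int.cast : ℤ → ℚ)
    = (1 : Matrix (Fin nf) (Fin nf) ℤ).map (Int.cast : ℤ → ℚ)
  rw [mapZQ_mul, SZ_map hm hT hA, SZ_map hm hT hB, Smap_mul hm hT, ← mapZQ_mul, hABone,
    mapZQ_one, Smap_one hm hT, mapZQ_one]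

lemma SZ_mem_ortho (hm : nf = ng + mm) (F : Matrix (Fin nf) (Fin nf) ℚ)
    (G : Matrix (Fin ng) (Fin ng) ℚ) (Hq : Matrix (Fin mm) (Fin mm) ℚ)
    {T : Matrix (Fin nf) (Fin nf) ℚ} (hT : T.det ≠ 0)
    (hFG : ∀ (x : Fin ng → ℚ) (y : Fin mm → ℚ),
      qeval F (T *ᵥ (Fin.append x y ∘ Fin.cast hm)) = qeval G x + qeval Hq y)
    {A : Matrix (Fin ng) (Fin ng) ℤ} (hA : CongOne (denT T) A)
    (hAG : ∀ x, qeval G ((A.map (algebraMap ℤ ℚ)) *ᵥ x) = qeval G x) :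
    ∀ x, qeval F (((SZ hm T A).map (algebraMap ℤ ℚ)) *ᵥ x) = qeval F x := by
  intro x
  rw [algMapZQ, SZ_map hm hT hA]
  refine qeval_Smap hm F G Hq hT hFG _ (fun y => ?_) x
  have := hAG y
  rwa [algMapZQ] at this

lemma SZ_eq_one (hm : nf = ng + mm) {T : Matrix (Fin nf) (Fin nf) ℚ} (hT : T.det ≠ 0)
    {A : Matrix (Fin ng) (Fin ng) ℤ} (hA : CongOne (denT T) A)
    (h1 : SZ hm T A = 1) : A = 1 := by
  have h2 : Smap hm T (A.map (Int.cast : ℤ → ℚ)) = 1 := by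
    rw [← SZ_map hm hT hA, h1, mapZQ_one]
  set E := emb hm (A.map (Int.cast : ℤ → ℚ)) with hE
  have h2' : T * E * T⁻¹ = 1 := h2
  have h3 : E = 1 := by
    calc E = T⁻¹ * T * E * (T⁻¹ * T) := by
          rw [Matrix.nonsing_inv_mul _ (isUnit_iff_ne_zero.mpr hT), Matrix.one_mul, Matrix.mul_one]
      _ = T⁻¹ * (T * E * T⁻¹) * T := by simp only [Matrix.mul_assoc]
      _ = T⁻¹ * 1 * T := by rw [h2']
      _ = 1 := by rw [Matrix.mul_one, Matrix.nonsing_inv_mul _ (isUnit_iff_ne_zero.mpr hT)]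
  have h4 : A.map (Int.cast : ℤ → ℚ) = 1 := by
    apply emb_injective hm
    rw [← hE, h3, emb_one]
  apply Matrix.map_injective (Int.cast_injective (α := ℚ))
  show A.map (Int.cast : ℤ → ℚ) = (1 : Matrix (Fin ng) (Fin ng) ℤ).map (Int.cast : ℤ → ℚ)
  rw [h4, mapZQ_one]

end Stmt9Aux2

/-- If `f` represents `g` then a finite index subgroup of `O(g,ℤ)` embeds
into `O(f,ℤ)`. -/
theorem finiteIndex_embedding_of_represents {nf ng : ℕ}
    (F : Matrix (Fin nf) (Fin nf) ℚ) (G : Matrix (Fin ng) (Fin ng) ℚ)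
    (hFsymm : F.IsSymm) (hGsymm : G.IsSymm)
    (hFns : F.det ≠ 0) (hGns : G.det ≠ 0)
    (hrep : Represents F G) :
    ∃ H : Subgroup ↥(OZ G), H.FiniteIndex ∧
      ∃ φ : ↥H →* ↥(OZ F), Function.Injective φ := by
  classical
  obtain ⟨mm, hm, Hq, T, hT, hFG⟩ := hrep
  haveI : NeZero (denT T) := ⟨(denT_pos T).ne'⟩
  let redG : GL (Fin ng) ℤ →* GL (Fin ng) (ZMod (denT T)) :=
    Units.map (RingHom.toMonoidHom (RingHom.mapMatrix (Int.castRingHom (ZMod (denT T)))))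
  let ρ : ↥(OZ G) →* GL (Fin ng) (ZMod (denT T)) := redG.comp (OZ G).subtype
  have hker : ∀ N : ↥(OZ G), N ∈ ρ.ker →
      CongOne (denT T) (((N : GL (Fin ng) ℤ) : Matrix (Fin ng) (Fin ng) ℤ)) := by
    intro N hN i j
    have h0 : ρ N = 1 := hN
    have h1 : (((N : GL (Fin ng) ℤ) : Matrix (Fin ng) (Fin ng) ℤ)).map
        (Int.cast : ℤ → ZMod (denT T)) = 1 := by
      have h2 := congrArg Units.val h0
      simpa [ρ, redG, RingHom.mapMatrix_apply] using h2
    have h3 := congrFun (congrFun h1 i) j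
    rw [Matrix.map_apply] at h3
    have h4 : (((1 : Matrix (Fin ng) (Fin ng) ℤ) i j : ℤ) : ZMod (denT T))
        = (1 : Matrix (Fin ng) (Fin ng) (ZMod (denT T))) i j := by
      simp [Matrix.one_apply, apply_ite (Int.cast : ℤ → ZMod (denT T))]
    rw [← ZMod.intCast_zmod_eq_zero_iff_dvd, Int.cast_sub, h3, h4, sub_self]
  refine ⟨ρ.ker, ?_, ?_⟩
  · haveI : Finite (GL (Fin ng) (ZMod (denT T))) := inferInstance
    infer_instance
  · have hdvd : ∀ N : ↥ρ.ker,
        CongOne (denT T) ((((N : ↥(OZ G)) : GL (Fin ng) ℤ) : Matrix (Fin ng) (Fin ng) ℤ)) :=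
      fun N => hker N.1 N.2
    let umat : ↥ρ.ker → Matrix (Fin ng) (Fin ng) ℤ :=
      fun N => (((N : ↥(OZ G)) : GL (Fin ng) ℤ) : Matrix (Fin ng) (Fin ng) ℤ)
    have hmulmat : ∀ N₁ N₂ : ↥ρ.ker, umat (N₁ * N₂) = umat N₁ * umat N₂ := fun _ _ => rfl
    have hNmul : ∀ N : ↥ρ.ker, umat N * umat N⁻¹ = 1 :=
      fun N => Units.mul_inv ((N : ↥(OZ G)) : GL (Fin ng) ℤ)
    have hinvmat : ∀ N : ↥ρ.ker, umat N⁻¹ * umat N = 1 :=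
      fun N => Units.inv_mul ((N : ↥(OZ G)) : GL (Fin ng) ℤ)
    let Φ0 : ↥ρ.ker → GL (Fin nf) ℤ := fun N =>
      ⟨SZ hm T (umat N), SZ hm T (umat N⁻¹),
        SZ_mul_eq_one hm hT (hdvd N) (hdvd N⁻¹) (hNmul N),
        SZ_mul_eq_one hm hT (hdvd N⁻¹) (hdvd N) (hinvmat N)⟩
    let Φf : ↥ρ.ker → ↥(OZ F) := fun N =>
      ⟨Φ0 N, fun x => SZ_mem_ortho hm F G Hq hT hFG (hdvd N) ((N : ↥(OZ G)).2) x⟩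
    refine ⟨MonoidHom.mk' Φf ?_, ?_⟩
    · intro N₁ N₂
      apply Subtype.ext
      apply Units.ext
      show SZ hm T (umat (N₁ * N₂)) = SZ hm T (umat N₁) * SZ hm T (umat N₂)
      rw [hmulmat]
      exact SZ_mul hm hT (hdvd N₁) (hdvd N₂) (by rw [← hmulmat]; exact hdvd (N₁ * N₂))
    · rw [injective_iff_map_eq_one]
      intro N hN
      have h1 : SZ hm T (umat N) = 1 := by
        have h2 := congrArg
          (fun x : ↥(OZ F) => ((x : GL (Fin nf) ℤ) : Matrix (Fin nf) (Fin nf) ℤ)) hN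
        simpa [Φf, Φ0] using h2
      have h2 : umat N = 1 := SZ_eq_one hm hT (hdvd N) h1
      apply Subtype.ext
      apply Subtype.ext
      exact Units.ext h2

end Paper
end

section
/- Let f and g be nonsingular quadratic forms with rational coefficients in m variables that are linearly equivalent over ℚ, i.e., there exists T ∈ GL(m,ℚ) with f(Tx) = g(x) for all x. Then the groups O(f,ℤ) and O(g,ℤ) are abstractly commensurable: they contain isomorphic subgroups of finite index. -/
namespace Paper

open Matrix

section Aux
variable {m : ℕ}

lemma mapc_inj : Function.Injective (fun B : Matrix (Fin m) (Fin m) ℤ => B.map (Int.cast : ℤ → ℚ)) := by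
  intro A B h
  ext i j
  have := congrFun (congrFun h i) j
  simpa [Matrix.map_apply] using this

lemma ratscale (q : ℚ) (d : ℤ) (h : (q.den : ℤ) ∣ d) :
    ((d / (q.den : ℤ) * q.num : ℤ) : ℚ) = (d : ℚ) * q := by
  obtain ⟨k, hk⟩ := h
  have hden : (q.den : ℤ) ≠ 0 := Int.natCast_ne_zero.2 q.den_nz
  subst hk
  rw [Int.mul_ediv_cancel_left _ hden]
  push_cast
  rw [mul_comm (q.den : ℚ), mul_assoc]
  congr 1
  rw [mul_comm]
  field_simp [Rat.num_div_den]
  exact (Rat.mul_den_eq_num q).symm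

lemma exists_den (T : Matrix (Fin m) (Fin m) ℚ) :
    ∃ d : ℤ, 0 < d ∧ ∃ P : Matrix (Fin m) (Fin m) ℤ, P.map (Int.cast) = (d : ℚ) • T := by
  refine ⟨∏ p : Fin m × Fin m, ((T p.1 p.2).den : ℤ), Finset.prod_pos (fun p _ => by positivity), ?_⟩
  refine ⟨Matrix.of fun i j => ((∏ p : Fin m × Fin m, ((T p.1 p.2).den : ℤ)) / ((T i j).den : ℤ) * (T i j).num), ?_⟩
  ext i j
  simp only [Matrix.map_apply, Matrix.smul_apply, Matrix.of_apply, smul_eq_mul]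
  exact ratscale _ _ (Finset.dvd_prod_of_mem (fun p => ((T p.1 p.2).den : ℤ)) (Finset.mem_univ (i,j)))

lemma key (S S' : Matrix (Fin m) (Fin m) ℚ) (hSS' : S * S' = 1)
    (d k : ℤ) (P Q : Matrix (Fin m) (Fin m) ℤ)
    (hP : P.map (Int.cast) = (d : ℚ) • S) (hQ : Q.map (Int.cast) = (d : ℚ) • S')
    (M : Matrix (Fin m) (Fin m) ℤ) (hM : ∀ i j, (d^2 * k) ∣ (M - 1) i j) :
    ∃ B : Matrix (Fin m) (Fin m) ℤ,
      B.map (Int.cast) = S * M.map (Int.cast) * S' ∧ ∀ i j, k ∣ (B - 1) i j := by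
  set f := (RingHom.mapMatrix (Int.castRingHom ℚ) : Matrix (Fin m) (Fin m) ℤ →+* Matrix (Fin m) (Fin m) ℚ) with hf
  have hfeq : ∀ X : Matrix (Fin m) (Fin m) ℤ, X.map (Int.cast) = f X := fun X => rfl
  set A : Matrix (Fin m) (Fin m) ℤ := Matrix.of fun i j => (M - 1) i j / (d^2 * k) with hA
  have hMA : M = 1 + (d^2 * k) • A := by
    ext i j
    simp only [Matrix.add_apply, Matrix.smul_apply, hA, Matrix.of_apply, smul_eq_mul]
    rw [Int.mul_ediv_cancel' (hM i j), Matrix.sub_apply]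
    ring
  have hP' : f P = (d : ℚ) • S := by rw [← hfeq]; exact hP
  have hQ' : f Q = (d : ℚ) • S' := by rw [← hfeq]; exact hQ
  refine ⟨1 + k • (P * A * Q), ?_, ?_⟩
  · rw [hfeq, hfeq, map_add, _root_.map_one, map_zsmul, _root_.map_mul, _root_.map_mul, hP', hQ']
    rw [hMA, map_add, _root_.map_one, map_zsmul, mul_add, add_mul, mul_one, hSS']
    rw [smul_mul_assoc, smul_mul_assoc, mul_smul_comm, mul_smul_comm, smul_mul_assoc]
    rw [← Int.cast_smul_eq_zsmul ℚ k, ← Int.cast_smul_eq_zsmul ℚ (d^2*k), smul_smul, smul_smul]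
    congr 1
    push_cast
    ring
  · intro i j
    simp only [Matrix.add_apply, Matrix.smul_apply, Matrix.sub_apply, add_sub_cancel_left,
      smul_eq_mul]
    exact Dvd.intro _ rfl

lemma mapc_mul (X Y : Matrix (Fin m) (Fin m) ℤ) :
    ((X * Y) : Matrix (Fin m) (Fin m) ℤ).map (Int.cast : ℤ → ℚ)
      = X.map (Int.cast) * Y.map (Int.cast) :=
  map_mul (RingHom.mapMatrix (Int.castRingHom ℚ)) X Y

lemma mapc_one : ((1 : Matrix (Fin m) (Fin m) ℤ)).map (Int.cast : ℤ → ℚ) = 1 :=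
  map_one (RingHom.mapMatrix (Int.castRingHom ℚ))

def red (n : ℕ) : GL (Fin m) ℤ →* GL (Fin m) (ZMod n) :=
  Units.map (RingHom.toMonoidHom (RingHom.mapMatrix (Int.castRingHom (ZMod n))))

lemma matcong_iff (n : ℕ) (M : Matrix (Fin m) (Fin m) ℤ) :
    M.map (Int.cast : ℤ → ZMod n) = 1 ↔ ∀ i j, (n : ℤ) ∣ (M - 1) i j := by
  constructor
  · intro h i j
    have := congrFun (congrFun h i) j
    rw [← ZMod.intCast_zmod_eq_zero_iff_dvd]
    simp only [Matrix.sub_apply, Int.cast_sub, Matrix.map_apply] at *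
    rw [this]
    simp [Matrix.one_apply, apply_ite (Int.cast : ℤ → ZMod n)]
  · intro h
    ext i j
    have := (ZMod.intCast_zmod_eq_zero_iff_dvd _ n).2 (h i j)
    simp only [Matrix.sub_apply, Int.cast_sub, sub_eq_zero] at this
    simp only [Matrix.map_apply, this, Matrix.one_apply, apply_ite (Int.cast : ℤ → ZMod n)]
    simp

lemma mem_ker_red_iff (n : ℕ) (M : GL (Fin m) ℤ) :
    M ∈ (red (m := m) n).ker ↔ (M : Matrix (Fin m) (Fin m) ℤ).map (Int.cast : ℤ → ZMod n) = 1 := by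
  rw [MonoidHom.mem_ker]
  constructor
  · intro h
    exact congrArg Units.val h
  · intro h
    exact Units.ext h

def mkUnit (B B' : Matrix (Fin m) (Fin m) ℤ) (U V : Matrix (Fin m) (Fin m) ℚ)
    (hB : B.map (Int.cast) = U) (hB' : B'.map (Int.cast) = V)
    (hUV : U * V = 1) (hVU : V * U = 1) : GL (Fin m) ℤ where
  val := B
  inv := B'
  val_inv := by
    apply mapc_inj
    show (B * B').map _ = (1 : Matrix (Fin m) (Fin m) ℤ).map _
    have h1 : ((B * B') : Matrix (Fin m) (Fin m) ℤ).map (Int.cast : ℤ → ℚ)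
        = B.map Int.cast * B'.map Int.cast :=
      map_mul (RingHom.mapMatrix (Int.castRingHom ℚ)) B B'
    have h2 : ((1 : Matrix (Fin m) (Fin m) ℤ)).map (Int.cast : ℤ → ℚ) = 1 :=
      map_one (RingHom.mapMatrix (Int.castRingHom ℚ))
    rw [h1, h2, hB, hB', hUV]
  inv_val := by
    apply mapc_inj
    show (B' * B).map _ = (1 : Matrix (Fin m) (Fin m) ℤ).map _
    have h1 : ((B' * B) : Matrix (Fin m) (Fin m) ℤ).map (Int.cast : ℤ → ℚ)
        = B'.map Int.cast * B.map Int.cast :=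
      map_mul (RingHom.mapMatrix (Int.castRingHom ℚ)) B' B
    have h2 : ((1 : Matrix (Fin m) (Fin m) ℤ)).map (Int.cast : ℤ → ℚ) = 1 :=
      map_one (RingHom.mapMatrix (Int.castRingHom ℚ))
    rw [h1, h2, hB', hB, hVU]

@[simp] lemma mkUnit_val (B B' : Matrix (Fin m) (Fin m) ℤ) (U V : Matrix (Fin m) (Fin m) ℚ)
    (hB : B.map (Int.cast) = U) (hB' : B'.map (Int.cast) = V)
    (hUV : U * V = 1) (hVU : V * U = 1) :
    ((mkUnit B B' U V hB hB' hUV hVU : GL (Fin m) ℤ) : Matrix (Fin m) (Fin m) ℤ) = B := rfl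

lemma sandwich (S S' : Matrix (Fin m) (Fin m) ℚ) (h : S' * S = 1) (X Y : Matrix (Fin m) (Fin m) ℚ) :
    (S * X * S') * (S * Y * S') = S * (X * Y) * S' := by
  simp only [Matrix.mul_assoc]
  rw [show S' * (S * (Y * S')) = (S' * S) * (Y * S') from (Matrix.mul_assoc _ _ _).symm, h,
    Matrix.one_mul]

lemma unsandwich (S S' : Matrix (Fin m) (Fin m) ℚ) (h1 : S * S' = 1) (h2 : S' * S = 1)
    (X : Matrix (Fin m) (Fin m) ℚ) : S * (S' * X * S) * S' = X := by
  simp only [Matrix.mul_assoc]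
  rw [h1, Matrix.mul_one, show S * (S' * X) = (S * S') * X from (Matrix.mul_assoc _ _ _).symm, h1,
    Matrix.one_mul]

lemma mapc_mul_inv (M : GL (Fin m) ℤ) :
    ((M : Matrix (Fin m) (Fin m) ℤ).map (Int.cast : ℤ → ℚ)) *
      (((M⁻¹ : GL (Fin m) ℤ) : Matrix (Fin m) (Fin m) ℤ).map (Int.cast : ℤ → ℚ)) = 1 := by
  have h1 := map_mul (RingHom.mapMatrix (Int.castRingHom ℚ)) (M : Matrix (Fin m) (Fin m) ℤ)
    ((M⁻¹ : GL (Fin m) ℤ) : Matrix (Fin m) (Fin m) ℤ)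
  show (RingHom.mapMatrix (Int.castRingHom ℚ)) (M : Matrix (Fin m) (Fin m) ℤ) *
      (RingHom.mapMatrix (Int.castRingHom ℚ)) ((M⁻¹ : GL (Fin m) ℤ) : Matrix (Fin m) (Fin m) ℤ) = 1
  rw [← h1, M.mul_inv]
  exact map_one _

lemma mapc_inv_mul (M : GL (Fin m) ℤ) :
    (((M⁻¹ : GL (Fin m) ℤ) : Matrix (Fin m) (Fin m) ℤ).map (Int.cast : ℤ → ℚ)) *
      ((M : Matrix (Fin m) (Fin m) ℤ).map (Int.cast : ℤ → ℚ)) = 1 := by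
  have h1 := map_mul (RingHom.mapMatrix (Int.castRingHom ℚ))
    ((M⁻¹ : GL (Fin m) ℤ) : Matrix (Fin m) (Fin m) ℤ) (M : Matrix (Fin m) (Fin m) ℤ)
  show (RingHom.mapMatrix (Int.castRingHom ℚ)) ((M⁻¹ : GL (Fin m) ℤ) : Matrix (Fin m) (Fin m) ℤ) *
      (RingHom.mapMatrix (Int.castRingHom ℚ)) (M : Matrix (Fin m) (Fin m) ℤ) = 1
  rw [← h1, M.inv_mul]
  exact map_one _

noncomputable def conjUnit (S S' : Matrix (Fin m) (Fin m) ℚ) (hSS' : S * S' = 1) (hS'S : S' * S = 1)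
    (d k : ℤ) (P Q : Matrix (Fin m) (Fin m) ℤ)
    (hP : P.map (Int.cast) = (d : ℚ) • S) (hQ : Q.map (Int.cast) = (d : ℚ) • S')
    (M : GL (Fin m) ℤ)
    (h1 : ∀ i j, (d^2 * k) ∣ ((M : Matrix (Fin m) (Fin m) ℤ) - 1) i j)
    (h2 : ∀ i j, (d^2 * k) ∣ (((M⁻¹ : GL (Fin m) ℤ) : Matrix (Fin m) (Fin m) ℤ) - 1) i j) :
    GL (Fin m) ℤ :=
  mkUnit (key S S' hSS' d k P Q hP hQ _ h1).choose (key S S' hSS' d k P Q hP hQ _ h2).choose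
    (S * ((M : Matrix (Fin m) (Fin m) ℤ).map (Int.cast)) * S')
    (S * (((M⁻¹ : GL (Fin m) ℤ) : Matrix (Fin m) (Fin m) ℤ).map (Int.cast)) * S')
    (key S S' hSS' d k P Q hP hQ _ h1).choose_spec.1
    (key S S' hSS' d k P Q hP hQ _ h2).choose_spec.1
    (by rw [sandwich S S' hS'S, mapc_mul_inv, Matrix.mul_one, hSS'])
    (by rw [sandwich S S' hS'S, mapc_inv_mul, Matrix.mul_one, hSS'])

lemma conjUnit_val (S S' : Matrix (Fin m) (Fin m) ℚ) (hSS' : S * S' = 1) (hS'S : S' * S = 1)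
    (d k : ℤ) (P Q : Matrix (Fin m) (Fin m) ℤ)
    (hP : P.map (Int.cast) = (d : ℚ) • S) (hQ : Q.map (Int.cast) = (d : ℚ) • S')
    (M : GL (Fin m) ℤ) (h1) (h2) :
    ((conjUnit S S' hSS' hS'S d k P Q hP hQ M h1 h2 : GL (Fin m) ℤ) :
        Matrix (Fin m) (Fin m) ℤ).map (Int.cast)
      = S * ((M : Matrix (Fin m) (Fin m) ℤ).map (Int.cast)) * S' :=
  (key S S' hSS' d k P Q hP hQ _ h1).choose_spec.1

lemma conjUnit_cong (S S' : Matrix (Fin m) (Fin m) ℚ) (hSS' : S * S' = 1) (hS'S : S' * S = 1)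
    (d k : ℤ) (P Q : Matrix (Fin m) (Fin m) ℤ)
    (hP : P.map (Int.cast) = (d : ℚ) • S) (hQ : Q.map (Int.cast) = (d : ℚ) • S')
    (M : GL (Fin m) ℤ) (h1) (h2) :
    ∀ i j, k ∣ (((conjUnit S S' hSS' hS'S d k P Q hP hQ M h1 h2 : GL (Fin m) ℤ) :
        Matrix (Fin m) (Fin m) ℤ) - 1) i j :=
  (key S S' hSS' d k P Q hP hQ _ h1).choose_spec.2

end Aux

/-- Rationally equivalent nonsingular rational quadratic forms have
abstractly commensurable integral orthogonal groups. -/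
theorem commensurable_of_rationally_equivalent {m : ℕ}
    (F G : Matrix (Fin m) (Fin m) ℚ) (hFsymm : F.IsSymm) (hGsymm : G.IsSymm)
    (hFns : F.det ≠ 0) (hGns : G.det ≠ 0)
    (T : Matrix (Fin m) (Fin m) ℚ) (hT : T.det ≠ 0)
    (heq : ∀ x : Fin m → ℚ, qeval F (T *ᵥ x) = qeval G x) :
    AbstractlyCommensurable ↥(OZ F) ↥(OZ G) := by
  classical
  have hTdet : IsUnit T.det := hT.isUnit
  have hTT' : T * T⁻¹ = 1 := Matrix.mul_nonsing_inv T hTdet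
  have hT'T : T⁻¹ * T = 1 := Matrix.nonsing_inv_mul T hTdet
  obtain ⟨d1, hd1, P1, hP1⟩ := exists_den (T⁻¹)
  obtain ⟨d2, hd2, P2, hP2⟩ := exists_den T
  set d : ℤ := d1 * d2 with hd
  have hdpos : 0 < d := mul_pos hd1 hd2
  have hdne : d ≠ 0 := ne_of_gt hdpos
  have hP : (d2 • P1).map (Int.cast : ℤ → ℚ) = (d : ℚ) • T⁻¹ := by
    have h1 : (d2 • P1).map (Int.cast : ℤ → ℚ) = d2 • (P1.map (Int.cast : ℤ → ℚ)) :=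
      map_zsmul (RingHom.mapMatrix (Int.castRingHom ℚ)) d2 P1
    rw [h1, hP1, ← Int.cast_smul_eq_zsmul ℚ d2, smul_smul]
    congr 1
    rw [hd]
    push_cast
    ring
  have hQ : (d1 • P2).map (Int.cast : ℤ → ℚ) = (d : ℚ) • T := by
    have h1 : (d1 • P2).map (Int.cast : ℤ → ℚ) = d1 • (P2.map (Int.cast : ℤ → ℚ)) :=
      map_zsmul (RingHom.mapMatrix (Int.castRingHom ℚ)) d1 P2
    rw [h1, hP2, ← Int.cast_smul_eq_zsmul ℚ d1, smul_smul]
    congr 1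
    rw [hd]
    push_cast
    ring
  set e : ℕ := d.natAbs ^ 2 with he
  set e' : ℕ := d.natAbs ^ 4 with he'
  have heZ : (e : ℤ) = d ^ 2 * 1 := by
    rw [he, Nat.cast_pow, Int.natAbs_sq, mul_one]
  have he'Z : (e' : ℤ) = d ^ 2 * d ^ 2 := by
    rw [he', Nat.cast_pow,
      show ((d.natAbs : ℤ)) ^ 4 = ((d.natAbs : ℤ) ^ 2) * ((d.natAbs : ℤ) ^ 2) by ring,
      Int.natAbs_sq]
  haveI : NeZero e := ⟨pow_ne_zero _ (Int.natAbs_ne_zero.2 hdne)⟩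
  haveI : NeZero e' := ⟨pow_ne_zero _ (Int.natAbs_ne_zero.2 hdne)⟩
  -- membership translation
  have hmapeq : ∀ X : Matrix (Fin m) (Fin m) ℤ,
      X.map (⇑(algebraMap ℤ ℚ)) = X.map (Int.cast : ℤ → ℚ) := by
    intro X; ext i j; simp [Matrix.map_apply]
  have hOZmem : ∀ (W : Matrix (Fin m) (Fin m) ℚ) (M : GL (Fin m) ℤ), M ∈ OZ W ↔
      ∀ x, qeval W (((M : Matrix (Fin m) (Fin m) ℤ).map (Int.cast : ℤ → ℚ)) *ᵥ x) = qeval W x := by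
    intro W M
    constructor
    · intro h x
      have h' : ∀ y, qeval W (((M : Matrix (Fin m) (Fin m) ℤ).map (⇑(algebraMap ℤ ℚ))) *ᵥ y)
          = qeval W y := h
      have := h' x
      rwa [hmapeq] at this
    · intro h
      show ∀ y, qeval W (((M : Matrix (Fin m) (Fin m) ℤ).map (⇑(algebraMap ℤ ℚ))) *ᵥ y) = qeval W y
      intro y
      rw [hmapeq]
      exact h y
  -- conjugation preserves forms
  have hFtoG : ∀ N : Matrix (Fin m) (Fin m) ℚ, (∀ x, qeval F (N *ᵥ x) = qeval F x) →
      ∀ x, qeval G ((T⁻¹ * N * T) *ᵥ x) = qeval G x := by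
    intro N hN x
    have h1 : qeval G ((T⁻¹ * N * T) *ᵥ x) = qeval F (T *ᵥ ((T⁻¹ * N * T) *ᵥ x)) := (heq _).symm
    rw [h1, Matrix.mulVec_mulVec]
    rw [show T * (T⁻¹ * N * T) = (T * T⁻¹) * N * T by simp only [Matrix.mul_assoc]]
    rw [hTT', Matrix.one_mul, ← Matrix.mulVec_mulVec, hN, heq]
  have hGtoF : ∀ N : Matrix (Fin m) (Fin m) ℚ, (∀ x, qeval G (N *ᵥ x) = qeval G x) →
      ∀ x, qeval F ((T * N * T⁻¹) *ᵥ x) = qeval F x := by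
    intro N hN x
    have h1 : (T * N * T⁻¹) *ᵥ x = T *ᵥ (N *ᵥ (T⁻¹ *ᵥ x)) := by
      rw [Matrix.mulVec_mulVec, Matrix.mulVec_mulVec, Matrix.mul_assoc]
    rw [h1, heq, hN, ← heq, Matrix.mulVec_mulVec, hTT', Matrix.one_mulVec]
  -- congruence helpers
  have hcong_of_ker : ∀ (n : ℕ) (M : GL (Fin m) ℤ), M ∈ (red (m := m) n).ker →
      ∀ i j, (n : ℤ) ∣ ((M : Matrix (Fin m) (Fin m) ℤ) - 1) i j :=
    fun n M h => (matcong_iff n _).1 ((mem_ker_red_iff n M).1 h)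
  have hker_of_cong : ∀ (n : ℕ) (M : GL (Fin m) ℤ),
      (∀ i j, (n : ℤ) ∣ ((M : Matrix (Fin m) (Fin m) ℤ) - 1) i j) → M ∈ (red (m := m) n).ker :=
    fun n M h => (mem_ker_red_iff n M).2 ((matcong_iff n _).2 h)
  set ρF : ↥(OZ F) →* GL (Fin m) (ZMod e) := (red e).comp (OZ F).subtype with hρF
  set A : Subgroup ↥(OZ F) := ρF.ker with hA
  set ρG : ↥(OZ G) →* GL (Fin m) (ZMod e') := (red e').comp (OZ G).subtype with hρG
  set A' : Subgroup ↥(OZ G) := ρG.ker with hA'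
  -- congruence conditions for elements of A
  have hc1 : ∀ x : ↥A, ∀ i j,
      (d ^ 2 * 1) ∣ (((x.1.1 : GL (Fin m) ℤ) : Matrix (Fin m) (Fin m) ℤ) - 1) i j := by
    intro x i j
    rw [← heZ]
    have hk : (x.1.1 : GL (Fin m) ℤ) ∈ (red (m := m) e).ker := x.2
    exact hcong_of_ker e _ hk i j
  have hc2 : ∀ x : ↥A, ∀ i j,
      (d ^ 2 * 1) ∣ ((((x.1.1)⁻¹ : GL (Fin m) ℤ) : Matrix (Fin m) (Fin m) ℤ) - 1) i j := by
    intro x i j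
    rw [← heZ]
    have hk : (x.1.1 : GL (Fin m) ℤ) ∈ (red (m := m) e).ker := x.2
    exact hcong_of_ker e _ (inv_mem hk) i j
  -- the conjugation map
  have memG : ∀ x : ↥A,
      conjUnit T⁻¹ T hT'T hTT' d 1 (d2 • P1) (d1 • P2) hP hQ x.1.1 (hc1 x) (hc2 x) ∈ OZ G := by
    intro x
    rw [hOZmem]
    intro y
    rw [conjUnit_val]
    have hxF : (x.1.1 : GL (Fin m) ℤ) ∈ OZ F := x.1.2
    rw [hOZmem] at hxF
    exact hFtoG _ hxF y
  set Φfun : ↥A → ↥(OZ G) := fun x =>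
    ⟨conjUnit T⁻¹ T hT'T hTT' d 1 (d2 • P1) (d1 • P2) hP hQ x.1.1 (hc1 x) (hc2 x), memG x⟩
    with hΦfun
  have hmul : ∀ x y : ↥A, Φfun (x * y) = Φfun x * Φfun y := by
    intro x y
    apply Subtype.ext
    apply Units.ext
    apply mapc_inj
    show ((conjUnit T⁻¹ T hT'T hTT' d 1 (d2 • P1) (d1 • P2) hP hQ (x*y).1.1 (hc1 (x*y))
        (hc2 (x*y)) : GL (Fin m) ℤ) : Matrix (Fin m) (Fin m) ℤ).map (Int.cast : ℤ → ℚ)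
      = (((Φfun x).1 * (Φfun y).1 : GL (Fin m) ℤ) : Matrix (Fin m) (Fin m) ℤ).map
          (Int.cast : ℤ → ℚ)
    rw [conjUnit_val]
    have hval : (((Φfun x).1 * (Φfun y).1 : GL (Fin m) ℤ) : Matrix (Fin m) (Fin m) ℤ)
        = ((Φfun x).1 : Matrix (Fin m) (Fin m) ℤ) * ((Φfun y).1 : Matrix (Fin m) (Fin m) ℤ) :=
      rfl
    rw [hval, mapc_mul, hΦfun]
    show T⁻¹ * (((x * y).1.1 : Matrix (Fin m) (Fin m) ℤ).map (Int.cast : ℤ → ℚ)) * T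
      = ((conjUnit T⁻¹ T hT'T hTT' d 1 (d2 • P1) (d1 • P2) hP hQ x.1.1 (hc1 x) (hc2 x) :
          GL (Fin m) ℤ) : Matrix (Fin m) (Fin m) ℤ).map (Int.cast : ℤ → ℚ) *
        ((conjUnit T⁻¹ T hT'T hTT' d 1 (d2 • P1) (d1 • P2) hP hQ y.1.1 (hc1 y) (hc2 y) :
          GL (Fin m) ℤ) : Matrix (Fin m) (Fin m) ℤ).map (Int.cast : ℤ → ℚ)
    rw [conjUnit_val, conjUnit_val, sandwich T⁻¹ T hTT']
    have hval2 : ((x * y).1.1 : Matrix (Fin m) (Fin m) ℤ)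
        = (x.1.1 : Matrix (Fin m) (Fin m) ℤ) * (y.1.1 : Matrix (Fin m) (Fin m) ℤ) := rfl
    rw [hval2, mapc_mul]
  set Φ : ↥A →* ↥(OZ G) := MonoidHom.mk' Φfun hmul with hΦ
  have hinj : Function.Injective Φ := by
    rw [injective_iff_map_eq_one]
    intro a ha
    have h1 : ((Φ a).1 : Matrix (Fin m) (Fin m) ℤ) = 1 := by rw [ha]; rfl
    have h2 : T⁻¹ * (((a.1.1 : GL (Fin m) ℤ) : Matrix (Fin m) (Fin m) ℤ).map
        (Int.cast : ℤ → ℚ)) * T = 1 := by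
      rw [← conjUnit_val T⁻¹ T hT'T hTT' d 1 (d2 • P1) (d1 • P2) hP hQ a.1.1 (hc1 a) (hc2 a)]
      show (((Φ a).1 : GL (Fin m) ℤ) : Matrix (Fin m) (Fin m) ℤ).map (Int.cast : ℤ → ℚ) = 1
      rw [h1]
      exact mapc_one
    have h3 : ((a.1.1 : GL (Fin m) ℤ) : Matrix (Fin m) (Fin m) ℤ).map (Int.cast : ℤ → ℚ) = 1 := by
      have := unsandwich T T⁻¹ hTT' hT'T
        (((a.1.1 : GL (Fin m) ℤ) : Matrix (Fin m) (Fin m) ℤ).map (Int.cast : ℤ → ℚ))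
      rw [← this, h2, Matrix.mul_one, hTT']
    have h4 : ((a.1.1 : GL (Fin m) ℤ) : Matrix (Fin m) (Fin m) ℤ) = 1 := by
      apply mapc_inj
      show ((a.1.1 : GL (Fin m) ℤ) : Matrix (Fin m) (Fin m) ℤ).map (Int.cast : ℤ → ℚ)
        = (1 : Matrix (Fin m) (Fin m) ℤ).map (Int.cast : ℤ → ℚ)
      rw [h3]
      exact mapc_one.symm
    apply Subtype.ext
    apply Subtype.ext
    exact Units.ext h4
  -- A' is contained in the range of Φ
  have hle : A' ≤ Φ.range := by
    intro y hy
    have hyk : (y.1 : GL (Fin m) ℤ) ∈ (red (m := m) e').ker := hy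
    have hy1 : ∀ i j, (d ^ 2 * d ^ 2) ∣
        (((y.1 : GL (Fin m) ℤ) : Matrix (Fin m) (Fin m) ℤ) - 1) i j := by
      intro i j
      rw [← he'Z]
      exact hcong_of_ker e' _ hyk i j
    have hy2 : ∀ i j, (d ^ 2 * d ^ 2) ∣
        ((((y.1)⁻¹ : GL (Fin m) ℤ) : Matrix (Fin m) (Fin m) ℤ) - 1) i j := by
      intro i j
      rw [← he'Z]
      exact hcong_of_ker e' _ (inv_mem hyk) i j
    set Mz : GL (Fin m) ℤ :=
      conjUnit T T⁻¹ hTT' hT'T d (d ^ 2) (d1 • P2) (d2 • P1) hQ hP y.1 hy1 hy2 with hMz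
    have hMzF : Mz ∈ OZ F := by
      rw [hOZmem]
      intro z
      rw [hMz, conjUnit_val]
      have hyG : (y.1 : GL (Fin m) ℤ) ∈ OZ G := y.2
      rw [hOZmem] at hyG
      exact hGtoF _ hyG z
    have hMzA : (⟨Mz, hMzF⟩ : ↥(OZ F)) ∈ A := by
      show Mz ∈ (red (m := m) e).ker
      apply hker_of_cong
      intro i j
      rw [heZ, mul_one]
      exact conjUnit_cong T T⁻¹ hTT' hT'T d (d ^ 2) (d1 • P2) (d2 • P1) hQ hP y.1 hy1 hy2 i j
    refine ⟨⟨⟨Mz, hMzF⟩, hMzA⟩, ?_⟩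
    apply Subtype.ext
    apply Units.ext
    apply mapc_inj
    show ((conjUnit T⁻¹ T hT'T hTT' d 1 (d2 • P1) (d1 • P2) hP hQ Mz
        (hc1 ⟨⟨Mz, hMzF⟩, hMzA⟩) (hc2 ⟨⟨Mz, hMzF⟩, hMzA⟩) : GL (Fin m) ℤ) :
        Matrix (Fin m) (Fin m) ℤ).map (Int.cast : ℤ → ℚ)
      = ((y.1 : GL (Fin m) ℤ) : Matrix (Fin m) (Fin m) ℤ).map (Int.cast : ℤ → ℚ)
    rw [conjUnit_val, hMz, conjUnit_val]
    exact unsandwich T⁻¹ T hT'T hTT' _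
  -- finite index
  haveI : Finite (GL (Fin m) (ZMod e)) :=
    inferInstanceAs (Finite (Matrix (Fin m) (Fin m) (ZMod e))ˣ)
  haveI : Finite (GL (Fin m) (ZMod e')) :=
    inferInstanceAs (Finite (Matrix (Fin m) (Fin m) (ZMod e'))ˣ)
  haveI hAfi : A.FiniteIndex := Subgroup.finiteIndex_ker ρF
  haveI hA'fi : A'.FiniteIndex := Subgroup.finiteIndex_ker ρG
  have hrangefi : Φ.range.FiniteIndex := by
    constructor
    intro h0
    have hdvd : Φ.range.index ∣ A'.index := Subgroup.index_dvd_of_le hle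
    rw [h0] at hdvd
    exact hA'fi.index_ne_zero (Nat.eq_zero_of_zero_dvd hdvd)
  exact ⟨A, Φ.range, hAfi, hrangefi, ⟨MonoidHom.ofInjective hinj⟩⟩

end Paper
end

section
/- Let A and B be finitely generated groups, let C be a group, and let C → A and C → B be injective group homomorphisms. If C is not finitely generated, then the amalgamated free product A *_C B (the pushout of the diagram A ← C → B in the category of groups) is finitely generated but not finitely presented. -/
namespace Paper

open Matrix

universe u

/-- Auxiliary: a directed supremum of normal subgroups is normal. -/
theorem aux_normal_iSup_of_directed {G : Type*} [Group G] {ι : Type*} [Nonempty ι]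
    {K : ι → Subgroup G} (hd : Directed (· ≤ ·) K) (hn : ∀ i, (K i).Normal) :
    (⨆ i, K i).Normal := by
  constructor
  intro x hx g
  obtain ⟨i, hi⟩ := (Subgroup.mem_iSup_of_directed hd).1 hx
  exact (Subgroup.mem_iSup_of_directed hd).2 ⟨i, (hn i).conj_mem x hi g⟩

/-- Auxiliary: the kernel of a surjection from a finitely generated group onto a finitely
presented group is the normal closure of a finite set. -/
theorem aux_exists_finset_ker_le {Q Gp : Type*} [Group Q] [Group Gp] (p : Q →* Gp)
    (hp : Function.Surjective p) (hQ : Group.FG Q) (hGp : IsFinitelyPresented Gp) :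
    ∃ T : Finset Q, (T : Set Q) ⊆ (p.ker : Set Q) ∧
      p.ker ≤ Subgroup.normalClosure (T : Set Q) := by
  classical
  obtain ⟨n, rels, hrelsfin, ⟨e⟩⟩ := hGp
  set π : FreeGroup (Fin n) →* Gp := e.toMonoidHom.comp (PresentedGroup.mk rels) with hπdef
  have hπs : Function.Surjective π := e.surjective.comp (PresentedGroup.mk_surjective rels)
  have hmkrels : ∀ r ∈ rels, PresentedGroup.mk rels r = 1 := fun r hr =>
    (QuotientGroup.eq_one_iff r).mpr (Subgroup.subset_normalClosure hr)
  have hπrels : ∀ r ∈ rels, π r = 1 := by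
    intro r hr
    simp [hπdef, hmkrels r hr]
  choose q hq using fun i : Fin n => hp (π (FreeGroup.of i))
  set h : FreeGroup (Fin n) →* Q := FreeGroup.lift q with hhdef
  have hph : p.comp h = π := FreeGroup.ext_hom _ _ (by simp [hhdef, hq])
  have hphx : ∀ x, p (h x) = π x := fun x => DFunLike.congr_fun hph x
  obtain ⟨Sset, hSclos, hSfin⟩ := Group.fg_iff.mp hQ
  choose w hw using fun s : Q => hπs (p s)
  set T : Finset Q :=
    hrelsfin.toFinset.image h ∪ hSfin.toFinset.image (fun s => s⁻¹ * h (w s)) with hTdef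
  have hTk : (T : Set Q) ⊆ (p.ker : Set Q) := by
    intro t ht
    simp only [hTdef, Finset.coe_union, Finset.coe_image, Set.Finite.coe_toFinset,
      Set.mem_union, Set.mem_image] at ht
    rcases ht with ⟨r, hr, rfl⟩ | ⟨s, _, rfl⟩
    · simp [MonoidHom.mem_ker, hphx, hπrels r hr]
    · simp [MonoidHom.mem_ker, hphx, hw]
  set M := Subgroup.normalClosure (T : Set Q) with hMdef
  have hTM : (T : Set Q) ⊆ (M : Set Q) := Subgroup.subset_normalClosure
  set f : Fin n → Q ⧸ M := fun i => QuotientGroup.mk' M (q i) with hfdef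
  have hliftf : FreeGroup.lift f = (QuotientGroup.mk' M).comp h :=
    FreeGroup.ext_hom _ _ (by simp [hfdef, hhdef])
  have hrels1 : ∀ r ∈ rels, FreeGroup.lift f r = 1 := by
    intro r hr
    rw [hliftf]
    have hmem : h r ∈ M := hTM (by
      simp only [hTdef, Finset.coe_union, Finset.coe_image, Set.Finite.coe_toFinset,
        Set.mem_union, Set.mem_image]
      exact Or.inl ⟨r, hr, rfl⟩)
    simpa [MonoidHom.mem_ker] using (QuotientGroup.eq_one_iff (h r)).mpr hmem
  set u : PresentedGroup rels →* Q ⧸ M := PresentedGroup.toGroup hrels1 with hudef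
  have hu : ∀ x : FreeGroup (Fin n), u (PresentedGroup.mk rels x) = QuotientGroup.mk' M (h x) := by
    intro x
    have : u (PresentedGroup.mk rels x) = FreeGroup.lift f x := rfl
    rw [this, hliftf]; rfl
  set v : Q →* Q ⧸ M := (u.comp e.symm.toMonoidHom).comp p with hvdef
  have hv : v = QuotientGroup.mk' M := by
    apply MonoidHom.eq_of_eqOn_dense hSclos
    intro s hs
    have h1 : e.symm (p s) = PresentedGroup.mk rels (w s) := by
      apply e.injective
      simp [hw, hπdef]
      exact (hw s).symm ▸ rfl
    show u (e.symm (p s)) = QuotientGroup.mk' M s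
    rw [h1, hu]
    have hmem : s⁻¹ * h (w s) ∈ M := hTM (by
      simp only [hTdef, Finset.coe_union, Finset.coe_image, Set.Finite.coe_toFinset,
        Set.mem_union, Set.mem_image]
      exact Or.inr ⟨s, hs, rfl⟩)
    have hmem' : (h (w s))⁻¹ * s ∈ M := by
      have := M.inv_mem hmem
      simpa using this
    simpa [QuotientGroup.mk'_apply] using (QuotientGroup.eq (s := M)).mpr hmem'
  refine ⟨T, hTk, fun x hx => ?_⟩
  have h1 : QuotientGroup.mk' M x = 1 := by
    rw [← hv]
    simp [hvdef, MonoidHom.mem_ker.mp hx]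
  exact (QuotientGroup.eq_one_iff x).mp h1

/-- Auxiliary: a finite free product of finitely generated groups is finitely generated. -/
theorem aux_coprodI_fg {ι : Type*} [Finite ι] {G : ι → Type*} [∀ i, Group (G i)]
    (h : ∀ i, Group.FG (G i)) : Group.FG (Monoid.CoprodI G) := by
  choose S hS hfin using fun i => Group.fg_iff.mp (h i)
  rw [Group.fg_iff]
  refine ⟨⋃ i, (Monoid.CoprodI.of : G i →* _) '' S i, ?_,
    Set.finite_iUnion fun i => (hfin i).image _⟩
  rw [eq_top_iff]
  intro x hx
  clear hx
  induction x using Monoid.CoprodI.induction_on with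
  | of i g =>
    have h1 : Monoid.CoprodI.of g ∈ (Subgroup.closure (S i)).map (Monoid.CoprodI.of : G i →* _) :=
      ⟨g, by rw [hS i]; trivial, rfl⟩
    rw [MonoidHom.map_closure] at h1
    exact Subgroup.closure_mono (Set.subset_iUnion (fun i => (Monoid.CoprodI.of : G i →* _) '' S i) i) h1
  | mul x y hx hy => exact mul_mem hx hy
  | one => exact one_mem _

/-- B. H. Neumann. The amalgamated free product `A *_C B` of finitely
generated groups over an injectively embedded, non-finitely-generated subgroup `C` is
finitely generated but not finitely presented. -/
theorem amalgam_fg_not_fp {C : Type u} [Group C] {G : Fin 2 → Type u} [∀ i, Group (G i)]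
    (φ : ∀ i, C →* G i) (hinj : ∀ i, Function.Injective (φ i))
    (hfg : ∀ i, Group.FG (G i)) (hC : ¬ Group.FG C) :
    Group.FG (Monoid.PushoutI φ) ∧ ¬ IsFinitelyPresented (Monoid.PushoutI φ) := by
  classical
  constructor
  · -- finitely generated
    choose S hS hfin using fun i => Group.fg_iff.mp (hfg i)
    rw [Group.fg_iff]
    refine ⟨⋃ i, (Monoid.PushoutI.of (φ := φ) i) '' S i, ?_,
      Set.finite_iUnion fun i => (hfin i).image _⟩
    have hof : ∀ (i : Fin 2) (g : G i),
        Monoid.PushoutI.of (φ := φ) i g ∈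
          Subgroup.closure (⋃ i, (Monoid.PushoutI.of (φ := φ) i) '' S i) := by
      intro i g
      have h1 : Monoid.PushoutI.of (φ := φ) i g ∈
          (Subgroup.closure (S i)).map (Monoid.PushoutI.of (φ := φ) i) :=
        ⟨g, by rw [hS i]; trivial, rfl⟩
      rw [MonoidHom.map_closure] at h1
      exact Subgroup.closure_mono
        (Set.subset_iUnion (fun i => (Monoid.PushoutI.of (φ := φ) i) '' S i) i) h1
    rw [eq_top_iff]
    intro x hx
    clear hx
    induction x using Monoid.PushoutI.induction_on with
    | of i g => exact hof i g
    | base h => rw [← Monoid.PushoutI.of_apply_eq_base φ 0 h]; exact hof 0 _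
    | mul x y hx hy => exact mul_mem hx hy
  · -- not finitely presented
    intro hFP
    set p : Monoid.CoprodI G →* Monoid.PushoutI φ := Monoid.PushoutI.ofCoprodI with hpdef
    have hpsurj : Function.Surjective p := by
      intro x
      induction x using Monoid.PushoutI.induction_on with
      | of i g => exact ⟨Monoid.CoprodI.of g, Monoid.PushoutI.ofCoprodI_of i g⟩
      | base h =>
        refine ⟨Monoid.CoprodI.of (φ 0 h), ?_⟩
        show Monoid.PushoutI.ofCoprodI (Monoid.CoprodI.of (φ 0 h)) = _
        rw [Monoid.PushoutI.ofCoprodI_of, Monoid.PushoutI.of_apply_eq_base]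
      | mul x y hx hy =>
        obtain ⟨a, ha⟩ := hx; obtain ⟨b, hb⟩ := hy
        exact ⟨a * b, by simp [ha, hb]⟩
    obtain ⟨T, hTker, hker⟩ := aux_exists_finset_ker_le p hpsurj (aux_coprodI_fg hfg) hFP
    set D : Finset C → Subgroup C := fun E => Subgroup.closure (E : Set C) with hDdef
    set rel : C → Monoid.CoprodI G := fun c =>
      (Monoid.CoprodI.of (φ 0 c)) * (Monoid.CoprodI.of (φ 1 c))⁻¹ with hreldef
    set K : Finset C → Subgroup (Monoid.CoprodI G) := fun E =>
      Subgroup.normalClosure (rel '' ((D E : Subgroup C) : Set C)) with hKdef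
    have hKmono : ∀ {E E' : Finset C}, E ⊆ E' → K E ≤ K E' := by
      intro E E' hEE
      exact Subgroup.normalClosure_mono
        (Set.image_mono (Subgroup.closure_mono (by exact_mod_cast hEE)))
    have hKdir : Directed (· ≤ ·) K := fun E E' =>
      ⟨E ∪ E', hKmono Finset.subset_union_left, hKmono Finset.subset_union_right⟩
    letI hNnormal : (⨆ E, K E).Normal :=
      aux_normal_iSup_of_directed hKdir (fun E => Subgroup.normalClosure_normal)
    set N := ⨆ E, K E with hNdef
    have hrelN : ∀ c : C, rel c ∈ N := by
      intro c
      refine le_iSup K {c} (Subgroup.subset_normalClosure ⟨c, ?_, rfl⟩)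
      exact Subgroup.subset_closure (by simp)
    set mkN : Monoid.CoprodI G →* Monoid.CoprodI G ⧸ N := QuotientGroup.mk' N with hmkNdef
    have key : ∀ c : C,
        mkN (Monoid.CoprodI.of (φ 1 c)) = mkN (Monoid.CoprodI.of (φ 0 c)) := by
      intro c
      have hconj : (Monoid.CoprodI.of (φ 1 c))⁻¹ * Monoid.CoprodI.of (φ 0 c) ∈ N := by
        have h2 := hNnormal.conj_mem _ (hrelN c) (Monoid.CoprodI.of (φ 1 c))⁻¹
        simpa [hreldef, mul_assoc] using h2
      simpa [hmkNdef, QuotientGroup.mk'_apply] using (QuotientGroup.eq (s := N)).mpr hconj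
    have hcompat : ∀ i : Fin 2,
        (mkN.comp (Monoid.CoprodI.of : G i →* Monoid.CoprodI G)).comp (φ i) =
          (mkN.comp (Monoid.CoprodI.of : G 0 →* Monoid.CoprodI G)).comp (φ 0) := by
      intro i
      fin_cases i
      · rfl
      · ext c
        exact key c
    set σ : Monoid.PushoutI φ →* Monoid.CoprodI G ⧸ N :=
      Monoid.PushoutI.lift (fun i => mkN.comp (Monoid.CoprodI.of : G i →* Monoid.CoprodI G))
        ((mkN.comp (Monoid.CoprodI.of : G 0 →* Monoid.CoprodI G)).comp (φ 0)) hcompat with hσdef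
    have hσp : σ.comp p = mkN := by
      apply Monoid.CoprodI.ext_hom
      intro i
      ext g
      simp [hσdef, hpdef]
    have hkerN : p.ker ≤ N := by
      intro x hx
      have h1 : mkN x = 1 := by
        rw [← hσp]
        simp [MonoidHom.mem_ker.mp hx]
      exact (QuotientGroup.eq_one_iff x).mp h1
    have hTN : ∀ t ∈ T, ∃ E, t ∈ K E := fun t ht =>
      (Subgroup.mem_iSup_of_directed hKdir).1 (hkerN (hTker ht))
    choose Ef hEf using hTN
    set E0 : Finset C := T.attach.biUnion (fun t => Ef t.1 t.2) with hE0def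
    have hTK : (T : Set (Monoid.CoprodI G)) ⊆ (K E0 : Set (Monoid.CoprodI G)) := by
      intro t ht
      exact hKmono (Finset.subset_biUnion_of_mem (fun t : {x // x ∈ T} => Ef t.1 t.2)
        (Finset.mem_attach T ⟨t, ht⟩)) (hEf t ht)
    have hkerK : p.ker ≤ K E0 := le_trans hker (Subgroup.normalClosure_le_normal hTK)
    have hDne : D E0 ≠ ⊤ := by
      intro hD
      exact hC (Group.fg_iff.mpr ⟨(E0 : Set C), hD, E0.finite_toSet⟩)
    obtain ⟨c, hc⟩ : ∃ c : C, c ∉ D E0 := by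
      by_contra hcon
      push_neg at hcon
      exact hDne (eq_top_iff.mpr fun x _ => hcon x)
    have hrelker : rel c ∈ p.ker := by
      simp only [MonoidHom.mem_ker, hreldef, hpdef, _root_.map_mul, _root_.map_inv,
        Monoid.PushoutI.ofCoprodI_of, Monoid.PushoutI.of_apply_eq_base]
      exact mul_inv_eq_one.mpr rfl
    have hrelK : rel c ∈ K E0 := hkerK hrelker
    set ψ : ∀ i : Fin 2, (D E0) →* G i := fun i => (φ i).comp (D E0).subtype with hψdef
    have hψinj : ∀ i, Function.Injective (ψ i) := fun i =>
      (hinj i).comp Subtype.coe_injective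
    set pD : Monoid.CoprodI G →* Monoid.PushoutI ψ := Monoid.PushoutI.ofCoprodI with hpDdef
    have hKle : K E0 ≤ pD.ker := by
      apply Subgroup.normalClosure_le_normal
      rintro _ ⟨d, hd, rfl⟩
      have h0 : φ 0 d = ψ 0 ⟨d, hd⟩ := rfl
      have h1 : φ 1 d = ψ 1 ⟨d, hd⟩ := rfl
      simp only [SetLike.mem_coe, MonoidHom.mem_ker, hreldef, hpDdef, _root_.map_mul, _root_.map_inv,
        Monoid.PushoutI.ofCoprodI_of, h0, h1, Monoid.PushoutI.of_apply_eq_base]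
      exact mul_inv_eq_one.mpr rfl
    have hpDrel : pD (rel c) = 1 := MonoidHom.mem_ker.mp (hKle hrelK)
    have heq : Monoid.PushoutI.of (φ := ψ) 0 (φ 0 c) =
        Monoid.PushoutI.of (φ := ψ) 1 (φ 1 c) := by
      have h1 : Monoid.PushoutI.of (φ := ψ) 0 (φ 0 c) *
          (Monoid.PushoutI.of (φ := ψ) 1 (φ 1 c))⁻¹ = 1 := by
        simpa [hreldef, hpDdef, _root_.map_mul, _root_.map_inv] using hpDrel
      exact mul_inv_eq_one.mp h1
    have hmem : Monoid.PushoutI.of (φ := ψ) 0 (φ 0 c) ∈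
        (Monoid.PushoutI.of (φ := ψ) 0).range ⊓ (Monoid.PushoutI.of (φ := ψ) 1).range :=
      ⟨⟨φ 0 c, rfl⟩, ⟨φ 1 c, heq.symm⟩⟩
    rw [Monoid.PushoutI.inf_of_range_eq_base_range hψinj
      (by decide : (0 : Fin 2) ≠ 1)] at hmem
    obtain ⟨d, hd⟩ := hmem
    rw [← Monoid.PushoutI.of_apply_eq_base ψ 0 d] at hd
    have hd1 : ψ 0 d = φ 0 c := Monoid.PushoutI.of_injective hψinj 0 hd
    have hd2 : (d : C) = c := hinj 0 hd1
    exact hc (hd2 ▸ d.2)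

end Paper
end
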